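/- Stationary phase evaluation of the model example on the beam axis. Fix x₁ ∈ ℝ, x₁ ≠ 0, and for k > 0 define u(x₁, k) := (−2ik/4π) ∫_{ℝ²} e^{ik√(x₁² + |y′|²) − k|y′|²/2} / √(x₁² + |y′|²) dy′. Then there exist a constant C (depending on x₁) and k₀ ≥ 1 such that for all k ≥ k₀: |u(x₁, k) − (1 + i|x₁|)^{−1} e^{ik|x₁|}| ≤ C k^{−1}. That is, the leading term of the stationary phase expansion of u on the axis x′ = 0 is exactly the Gaussian beam value u_GB(x₁, 0) = (1 + i|x₁|)^{−1} e^{ik|x₁|}. -/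

import Mathlib

open MeasureTheory Set Filter

lemma aux_integrableOn_cexp_neg {c : ℂ} (hc : 0 < c.re) :
    IntegrableOn (fun t : ℝ => Complex.exp (-(c * t))) (Ioi 0) := by
  apply Integrable.mono' ((exp_neg_integrableOn_Ioi 0 hc).congr_fun (fun t ht => rfl) measurableSet_Ioi)
  · exact (Complex.continuous_exp.comp ((continuous_const.mul Complex.continuous_ofReal).neg)).aestronglyMeasurable
  · filter_upwards with t
    rw [Complex.norm_exp]
    simp [Complex.ofReal_mul, neg_mul]

lemma aux_integral_cexp_neg {c : ℂ} (hc : 0 < c.re) :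
    ∫ t in Ioi (0:ℝ), Complex.exp (-(c * t)) = c⁻¹ := by
  have hc0 : c ≠ 0 := fun h => by simp [h] at hc
  have hderiv : ∀ t ∈ Ici (0:ℝ), HasDerivAt (fun t : ℝ => -c⁻¹ * Complex.exp (-(c * t)))
      (Complex.exp (-(c * t))) t := by
    intro t _
    have h1 : HasDerivAt (fun t : ℝ => -(c * (t:ℂ))) (-c) t := by
      exact (((Complex.ofRealCLM.hasDerivAt (x := t)).const_mul c).neg).congr_deriv (by simp)
    have := (h1.cexp).const_mul (-c⁻¹)
    refine this.congr_deriv ?_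
    field_simp
  have htend : Tendsto (fun t : ℝ => -c⁻¹ * Complex.exp (-(c * t))) atTop (nhds 0) := by
    rw [tendsto_zero_iff_norm_tendsto_zero]
    have : (fun t : ℝ => ‖-c⁻¹ * Complex.exp (-(c * t))‖) =
        fun t : ℝ => ‖c⁻¹‖ * Real.exp (-(c.re * t)) := by
      funext t
      rw [norm_mul, norm_neg, Complex.norm_exp]
      congr 2
      simp
    rw [this]
    rw [show (0:ℝ) = ‖c⁻¹‖ * 0 by ring]
    apply Tendsto.const_mul
    apply Real.tendsto_exp_atBot.comp
    exact tendsto_neg_atBot_iff.mpr (Tendsto.const_mul_atTop hc tendsto_id)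
  have := integral_Ioi_of_hasDerivAt_of_tendsto' hderiv (aux_integrableOn_cexp_neg hc) htend
  rw [this]
  simp

lemma aux_integrableOn_sq_exp {r : ℝ} (hr : 0 < r) :
    IntegrableOn (fun t : ℝ => t ^ 2 * Real.exp (-(r * t))) (Ioi 0) := by
  have := integrableOn_rpow_mul_exp_neg_mul_rpow (s := 2) (p := 1) (b := r) (by norm_num) one_pos hr
  apply this.congr_fun _ measurableSet_Ioi
  intro t ht
  rw [mem_Ioi] at ht
  show t ^ (2:ℝ) * Real.exp (-r * t ^ (1:ℝ)) = _
  rw [show (2:ℝ) = ((2:ℕ):ℝ) by norm_num, Real.rpow_natCast, Real.rpow_one, neg_mul]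
  
lemma aux_integral_sq_exp {r : ℝ} (hr : 0 < r) :
    ∫ t in Ioi (0:ℝ), t ^ 2 * Real.exp (-(r * t)) = 2 / r ^ 3 := by
  have h := Real.integral_rpow_mul_exp_neg_mul_Ioi (a := 3) (r := r) (by norm_num) hr
  have heq : ∫ t in Ioi (0:ℝ), t ^ 2 * Real.exp (-(r * t))
      = ∫ t in Ioi (0:ℝ), t ^ ((3:ℝ) - 1) * Real.exp (-(r * t)) := by
    apply setIntegral_congr_fun measurableSet_Ioi
    intro t ht
    rw [mem_Ioi] at ht
    show t ^ (2:ℕ) * Real.exp (-(r * t)) = t ^ ((3:ℝ) - 1) * Real.exp (-(r * t))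
    rw [show (3:ℝ) - 1 = ((2:ℕ):ℝ) by norm_num, Real.rpow_natCast]
  rw [heq, h, show (3:ℝ) = ((2:ℕ):ℝ) + 1 by norm_num, Real.Gamma_nat_eq_factorial,
    show ((2:ℕ):ℝ) + 1 = ((3:ℕ):ℝ) by norm_num, Real.rpow_natCast]
  rw [div_pow]
  norm_num [Nat.factorial]
  ring

noncomputable def ffun (x₁ k : ℝ) (r : ℝ) : ℂ :=
  Complex.exp (Complex.I * (k : ℂ) * ((Real.sqrt (x₁ ^ 2 + r ^ 2) : ℝ) : ℂ)
      - (k : ℂ) * (r : ℝ) ^ 2 / 2)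
    / ((Real.sqrt (x₁ ^ 2 + r ^ 2) : ℝ) : ℂ)

noncomputable def gfun (a k : ℝ) (t : ℝ) : ℂ :=
  Complex.exp (Complex.I * (k : ℂ) * (a : ℂ) + -((k : ℂ) * ((a : ℂ) - Complex.I)) * (t : ℂ)
    + -((k : ℂ) * (t : ℂ) ^ 2 / 2))

noncomputable def mfun (a k : ℝ) (t : ℝ) : ℂ :=
  Complex.exp (Complex.I * (k : ℂ) * (a : ℂ) + -((k : ℂ) * ((a : ℂ) - Complex.I)) * (t : ℂ))

noncomputable def phifun (x₁ : ℝ) (r : ℝ) : ℝ := Real.sqrt (x₁ ^ 2 + r ^ 2) - |x₁|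

lemma sqrt_ge_abs (x₁ r : ℝ) : |x₁| ≤ Real.sqrt (x₁ ^ 2 + r ^ 2) := by
  rw [← Real.sqrt_sq_eq_abs]
  exact Real.sqrt_le_sqrt (by nlinarith)

lemma sqrt_ge_abs' (x₁ r : ℝ) : |r| ≤ Real.sqrt (x₁ ^ 2 + r ^ 2) := by
  rw [← Real.sqrt_sq_eq_abs]
  exact Real.sqrt_le_sqrt (by nlinarith)

lemma sqrt_pos' {x₁ : ℝ} (hx₁ : x₁ ≠ 0) (r : ℝ) : 0 < Real.sqrt (x₁ ^ 2 + r ^ 2) :=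
  Real.sqrt_pos.mpr (by positivity)

lemma gfun_key {x₁ : ℝ} (hx₁ : x₁ ≠ 0) (k r : ℝ) :
    gfun |x₁| k (phifun x₁ r) =
      Complex.exp (Complex.I * (k : ℂ) * ((Real.sqrt (x₁ ^ 2 + r ^ 2) : ℝ) : ℂ)
        - (k : ℂ) * (r : ℝ) ^ 2 / 2) := by
  unfold gfun phifun
  congr 1
  have hs : ((Real.sqrt (x₁ ^ 2 + r ^ 2) : ℝ) : ℂ) ^ 2 = (x₁ : ℂ) ^ 2 + (r : ℂ) ^ 2 := by
    rw [← Complex.ofReal_pow, Real.sq_sqrt (by positivity : (0:ℝ) ≤ x₁ ^ 2 + r ^ 2)]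
    push_cast
    ring
  have hab : ((|x₁| : ℝ) : ℂ) ^ 2 = (x₁ : ℂ) ^ 2 := by
    rw [← Complex.ofReal_pow, sq_abs, Complex.ofReal_pow]
  push_cast
  linear_combination (-(k : ℂ) / 2) * hs + ((k : ℂ) / 2) * hab

lemma abs_gfun (a k t : ℝ) :
    ‖gfun a k t‖ = Real.exp (-(k * a * t) - k * t ^ 2 / 2) := by
  unfold gfun
  rw [Complex.norm_exp]
  congr 1
  simp [Complex.add_re, Complex.mul_re, Complex.mul_im, ← Complex.ofReal_pow]
  ring

lemma abs_mfun (a k t : ℝ) :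
    ‖mfun a k t‖ = Real.exp (-(k * a * t)) := by
  unfold mfun
  rw [Complex.norm_exp]
  congr 1
  simp [Complex.add_re, Complex.mul_re, Complex.mul_im]

lemma gfun_sub_mfun (a k t : ℝ) :
    gfun a k t - mfun a k t = mfun a k t * (Complex.exp (-((k : ℂ) * (t : ℂ) ^ 2 / 2)) - 1) := by
  unfold gfun mfun
  rw [Complex.exp_add]
  ring

lemma abs_gfun_sub_mfun {a k : ℝ} (hk : 0 ≤ k) {t : ℝ} (_ht : 0 ≤ t) :
    ‖gfun a k t - mfun a k t‖ ≤ k / 2 * (t ^ 2 * Real.exp (-(k * a * t))) := by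
  rw [gfun_sub_mfun, norm_mul, abs_mfun]
  have h1 : Complex.exp (-((k : ℂ) * (t : ℂ) ^ 2 / 2)) = ((Real.exp (-(k * t ^ 2 / 2)) : ℝ) : ℂ) := by
    rw [Complex.ofReal_exp]
    congr 1
    push_cast
    ring
  rw [h1, ← Complex.ofReal_one, ← Complex.ofReal_sub, Complex.norm_real, Real.norm_eq_abs]
  have hx : 0 ≤ k * t ^ 2 / 2 := by positivity
  have hle1 : Real.exp (-(k * t ^ 2 / 2)) ≤ 1 := by
    rw [show (1:ℝ) = Real.exp 0 by simp]
    exact Real.exp_le_exp.mpr (by linarith)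
  have h2 : |Real.exp (-(k * t ^ 2 / 2)) - 1| ≤ k * t ^ 2 / 2 := by
    rw [abs_of_nonpos (by linarith)]
    have := Real.add_one_le_exp (-(k * t ^ 2 / 2))
    linarith
  calc Real.exp (-(k * a * t)) * |Real.exp (-(k * t ^ 2 / 2)) - 1|
      ≤ Real.exp (-(k * a * t)) * (k * t ^ 2 / 2) := by
        exact mul_le_mul_of_nonneg_left h2 (Real.exp_nonneg _)
    _ = k / 2 * (t ^ 2 * Real.exp (-(k * a * t))) := by ring

lemma continuous_gfun (a k : ℝ) : Continuous (gfun a k) := by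
  unfold gfun
  exact Complex.continuous_exp.comp (by continuity)

lemma continuous_mfun (a k : ℝ) : Continuous (mfun a k) := by
  unfold mfun
  exact Complex.continuous_exp.comp (by continuity)

lemma integrableOn_gfun {a k : ℝ} (ha : 0 < a) (hk : 0 < k) :
    IntegrableOn (gfun a k) (Ioi 0) := by
  apply Integrable.mono' ((exp_neg_integrableOn_Ioi 0 (by positivity : 0 < k * a)))
  · exact (continuous_gfun a k).aestronglyMeasurable
  · filter_upwards with t
    rw [abs_gfun]
    apply Real.exp_le_exp.mpr
    nlinarith [sq_nonneg t]

lemma integrableOn_mfun {a k : ℝ} (ha : 0 < a) (hk : 0 < k) :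
    IntegrableOn (mfun a k) (Ioi 0) := by
  apply Integrable.mono' ((exp_neg_integrableOn_Ioi 0 (by positivity : 0 < k * a)))
  · exact (continuous_mfun a k).aestronglyMeasurable
  · filter_upwards with t
    rw [abs_mfun]
    apply Real.exp_le_exp.mpr
    nlinarith

lemma re_pos_c {a k : ℝ} (ha : 0 < a) (hk : 0 < k) :
    0 < ((k : ℂ) * ((a : ℂ) - Complex.I)).re := by
  simp [Complex.mul_re]
  positivity

lemma integral_mfun {a k : ℝ} (ha : 0 < a) (hk : 0 < k) :
    ∫ t in Ioi (0:ℝ), mfun a k t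
      = Complex.exp (Complex.I * (k : ℂ) * (a : ℂ)) * ((k : ℂ) * ((a : ℂ) - Complex.I))⁻¹ := by
  have h1 : ∀ t : ℝ, mfun a k t = Complex.exp (Complex.I * (k : ℂ) * (a : ℂ)) *
      Complex.exp (-(((k : ℂ) * ((a : ℂ) - Complex.I)) * (t : ℂ))) := by
    intro t
    unfold mfun
    rw [Complex.exp_add, neg_mul]
  simp_rw [h1]
  rw [integral_const_mul, aux_integral_cexp_neg (re_pos_c ha hk)]

lemma abs_gfun_phi {x₁ : ℝ} (hx₁ : x₁ ≠ 0) (k r : ℝ) :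
    ‖gfun |x₁| k (phifun x₁ r)‖ = Real.exp (-(k * r ^ 2 / 2)) := by
  rw [gfun_key hx₁, Complex.norm_exp]
  congr 1
  simp [Complex.sub_re, Complex.mul_re, Complex.mul_im, ← Complex.ofReal_pow]

lemma continuous_phifun (x₁ : ℝ) : Continuous (phifun x₁) := by
  unfold phifun
  continuity

lemma phifun_nonneg (x₁ r : ℝ) : 0 ≤ phifun x₁ r :=
  sub_nonneg.mpr (sqrt_ge_abs x₁ r)

lemma phifun_zero (x₁ : ℝ) : phifun x₁ 0 = 0 := by
  unfold phifun
  rw [show x₁ ^ 2 + 0 ^ 2 = x₁ ^ 2 by ring, Real.sqrt_sq_eq_abs, sub_self]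

lemma hasDerivAt_phifun {x₁ : ℝ} (hx₁ : x₁ ≠ 0) (r : ℝ) :
    HasDerivAt (phifun x₁) (r / Real.sqrt (x₁ ^ 2 + r ^ 2)) r := by
  have h1 : HasDerivAt (fun r : ℝ => x₁ ^ 2 + r ^ 2) (2 * r) r := by
    simpa using (hasDerivAt_pow 2 r).const_add (x₁ ^ 2)
  have h2 := (Real.hasDerivAt_sqrt (by positivity : x₁ ^ 2 + r ^ 2 ≠ 0)).comp r h1
  have h3 := h2.sub_const |x₁|
  refine h3.congr_deriv ?_
  have hs := sqrt_pos' hx₁ r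
  field_simp

lemma cov_step {x₁ : ℝ} (hx₁ : x₁ ≠ 0) {k : ℝ} (hk : 0 < k) :
    ∫ r in Ioi (0:ℝ), r ^ 1 • ffun x₁ k r = ∫ t in Ioi (0:ℝ), gfun |x₁| k t := by
  have ha : 0 < |x₁| := abs_pos.mpr hx₁
  have hps : ∀ r : ℝ, 0 < Real.sqrt (x₁ ^ 2 + r ^ 2) := sqrt_pos' hx₁
  have hpt : ∀ r : ℝ, r ∈ Ioi (0:ℝ) →
      (r / Real.sqrt (x₁ ^ 2 + r ^ 2)) • ((gfun |x₁| k) ∘ (phifun x₁)) r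
        = r ^ 1 • ffun x₁ k r := by
    intro r _
    rw [Function.comp_apply, gfun_key hx₁, pow_one]
    unfold ffun
    rw [Complex.real_smul, Complex.real_smul, Complex.ofReal_div]
    have : ((Real.sqrt (x₁ ^ 2 + r ^ 2) : ℝ) : ℂ) ≠ 0 :=
      Complex.ofReal_ne_zero.mpr (ne_of_gt (hps r))
    field_simp
  rw [← setIntegral_congr_fun measurableSet_Ioi hpt]
  have h := integral_comp_smul_deriv_Ioi (f := phifun x₁)
    (f' := fun r => r / Real.sqrt (x₁ ^ 2 + r ^ 2)) (g := gfun |x₁| k) (a := 0)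
    ((continuous_phifun x₁).continuousOn)
    ?_ (fun r hr => (hasDerivAt_phifun hx₁ r).hasDerivWithinAt)
    ((continuous_gfun _ _).continuousOn) ?_ ?_
  · rw [h, phifun_zero]
  · -- Tendsto atTop atTop
    apply tendsto_atTop_mono (fun r => ?_) (tendsto_atTop_add_const_right atTop (-|x₁|) tendsto_id)
    show r + -|x₁| ≤ phifun x₁ r
    unfold phifun
    have := sqrt_ge_abs' x₁ r
    have := le_abs_self r
    linarith
  · -- IntegrableOn on image of Ici 0
    apply ((integrableOn_Ici_iff_integrableOn_Ioi).mpr (integrableOn_gfun ha hk)).mono_set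
    rintro y ⟨r, -, rfl⟩
    exact phifun_nonneg x₁ r
  · -- IntegrableOn of the substituted integrand on Ici 0
    apply Integrable.mono' ((integrable_exp_neg_mul_sq (half_pos hk)).integrableOn)
    · apply Continuous.aestronglyMeasurable ?_ |>.restrict
      apply Continuous.smul
      · exact Complex.continuous_ofReal.comp <| continuous_id.div (by continuity) (fun r => ne_of_gt (hps r))
      · exact (continuous_gfun _ _).comp (continuous_phifun x₁)
    · filter_upwards with r
      rw [norm_smul, Function.comp_apply, Real.norm_eq_abs,
        abs_gfun_phi hx₁]
      have h1 : |r / Real.sqrt (x₁ ^ 2 + r ^ 2)| ≤ 1 := by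
        rw [abs_div, abs_of_pos (hps r)]
        exact div_le_one_of_le₀ (sqrt_ge_abs' x₁ r) (le_of_lt (hps r))
      calc |r / Real.sqrt (x₁ ^ 2 + r ^ 2)| * Real.exp (-(k * r ^ 2 / 2))
          ≤ 1 * Real.exp (-(k * r ^ 2 / 2)) :=
            mul_le_mul_of_nonneg_right h1 (Real.exp_nonneg _)
        _ = Real.exp (-(k / 2) * r ^ 2) := by rw [one_mul]; ring_nf

lemma ball_vol_pi : (volume (Metric.ball (0 : EuclideanSpace ℝ (Fin 2)) 1)).toReal = Real.pi := by
  rw [EuclideanSpace.volume_ball]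
  have h1 : Real.Gamma ((Fintype.card (Fin 2) : ℝ) / 2 + 1) = 1 := by
    rw [Fintype.card_fin]
    rw [show ((2:ℕ):ℝ)/2 + 1 = ((1:ℕ):ℝ) + 1 by norm_num, Real.Gamma_nat_eq_factorial]
    simp
  rw [h1, Fintype.card_fin]
  rw [Real.sq_sqrt Real.pi_nonneg]
  simp [ENNReal.toReal_ofReal Real.pi_nonneg]

lemma polar_step (x₁ k : ℝ) :
    (∫ y' : EuclideanSpace ℝ (Fin 2), ffun x₁ k ‖y'‖)
      = (2:ℕ) • Real.pi • ∫ r in Ioi (0:ℝ), r ^ 1 • ffun x₁ k r := by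
  have h := integral_fun_norm_addHaar (volume : Measure (EuclideanSpace ℝ (Fin 2))) (ffun x₁ k)
  simp only [finrank_euclideanSpace_fin] at h
  rw [h, measureReal_def, ball_vol_pi]

lemma hGB_eq {a k : ℝ} (ha : 0 < a) (hk : 0 < k) :
    (1 + Complex.I * (a : ℝ))⁻¹ * Complex.exp (Complex.I * k * (a : ℝ))
      = -Complex.I * k * ∫ t in Ioi (0:ℝ), mfun a k t := by
  rw [integral_mfun ha hk]
  have h1 : (1 + Complex.I * (a : ℂ)) ≠ 0 := by
    intro h
    have := congrArg Complex.re h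
    simp at this
  have h2 : ((k : ℂ) * ((a : ℂ) - Complex.I)) ≠ 0 := by
    intro h
    have := congrArg Complex.re h
    rw [h] at this
    have := re_pos_c ha hk
    rw [h] at this
    simp at this
  field_simp
  rw [eq_comm, neg_eq_iff_eq_neg, div_eq_iff h2]
  linear_combination ((k : ℂ) * (a : ℂ)) * Complex.I_sq


open MeasureTheory

/-- Stationary phase evaluation of the model example on the beam axis:
the outgoing solution agrees with the Gaussian beam value up to `O(k⁻¹)`. -/
theorem model_example_stationary_phase_on_axis
    (x₁ : ℝ) (hx₁ : x₁ ≠ 0)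
    (u : ℝ → ℂ)
    (hu : ∀ k : ℝ, u k = (-2 * Complex.I * (k : ℂ) / (4 * (Real.pi : ℂ))) *
      ∫ y' : EuclideanSpace ℝ (Fin 2),
        Complex.exp (Complex.I * (k : ℂ) * ((Real.sqrt (x₁ ^ 2 + ‖y'‖ ^ 2) : ℝ) : ℂ)
            - (k : ℂ) * (‖y'‖ : ℝ) ^ 2 / 2)
          / ((Real.sqrt (x₁ ^ 2 + ‖y'‖ ^ 2) : ℝ) : ℂ)) :
    ∃ C : ℝ, ∃ k₀ : ℝ, 1 ≤ k₀ ∧ ∀ k : ℝ, k₀ ≤ k →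
      ‖u k - (1 + Complex.I * |x₁|)⁻¹ * Complex.exp (Complex.I * k * |x₁|)‖
        ≤ C / k := by
  have ha : 0 < |x₁| := abs_pos.mpr hx₁
  refine ⟨1 / |x₁| ^ 3, 1, le_rfl, ?_⟩
  intro k hk
  have hk0 : (0:ℝ) < k := lt_of_lt_of_le one_pos hk
  have hbig : (∫ y' : EuclideanSpace ℝ (Fin 2),
      Complex.exp (Complex.I * (k : ℂ) * ((Real.sqrt (x₁ ^ 2 + ‖y'‖ ^ 2) : ℝ) : ℂ)
          - (k : ℂ) * (‖y'‖ : ℝ) ^ 2 / 2)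
        / ((Real.sqrt (x₁ ^ 2 + ‖y'‖ ^ 2) : ℝ) : ℂ))
      = (2:ℕ) • Real.pi • ∫ t in Ioi (0:ℝ), gfun |x₁| k t := by
    rw [← cov_step hx₁ hk0]
    exact polar_step x₁ k
  have hu' : u k = -Complex.I * k * ∫ t in Ioi (0:ℝ), gfun |x₁| k t := by
    rw [hu k, hbig, nsmul_eq_mul, Complex.real_smul]
    have hπ : (Real.pi : ℂ) ≠ 0 := Complex.ofReal_ne_zero.mpr Real.pi_ne_zero
    field_simp
    ring
  have hJint := integrableOn_gfun ha hk0
  have hMint := integrableOn_mfun ha hk0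
  have hmain : u k - (1 + Complex.I * |x₁|)⁻¹ * Complex.exp (Complex.I * k * |x₁|)
      = -Complex.I * k * ∫ t in Ioi (0:ℝ), (gfun |x₁| k t - mfun |x₁| k t) := by
    rw [hu', hGB_eq ha hk0, integral_sub hJint hMint]
    ring
  rw [hmain, norm_mul, norm_mul]
  simp only [norm_neg, Complex.norm_I, Complex.norm_real, Real.norm_eq_abs, abs_of_pos hk0, one_mul]
  have hbound : ‖∫ t in Ioi (0:ℝ), (gfun |x₁| k t - mfun |x₁| k t)‖
      ≤ k / 2 * (2 / (k * |x₁|) ^ 3) := by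
    refine le_trans (norm_integral_le_integral_norm _) ?_
    have hmono : ∫ t in Ioi (0:ℝ), ‖gfun |x₁| k t - mfun |x₁| k t‖
        ≤ ∫ t in Ioi (0:ℝ), k / 2 * (t ^ 2 * Real.exp (-(k * |x₁| * t))) := by
      apply setIntegral_mono_on ((hJint.sub hMint).norm)
        ((aux_integrableOn_sq_exp (by positivity : (0:ℝ) < k * |x₁|)).const_mul (k/2))
        measurableSet_Ioi
      intro t ht
      exact abs_gfun_sub_mfun hk0.le (le_of_lt ht)
    refine le_trans hmono (le_of_eq ?_)
    rw [MeasureTheory.integral_const_mul, aux_integral_sq_exp (by positivity : (0:ℝ) < k * |x₁|)]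
  refine le_trans (mul_le_mul_of_nonneg_left hbound hk0.le) (le_of_eq ?_)
  field_simp
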